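/- Let B be a C*-algebra, E a Hilbert B-module, and K an ideal submodule of E. Then B_K (the closed linear span of {⟨k,k'⟩ : k, k' ∈ K}) is a closed two-sided ideal of B, K equals the closed linear span of {x·b : x ∈ E, b ∈ B_K}, and B_K ⊆ I for every closed two-sided ideal I of B such that K equals the closed linear span of {x·i : x ∈ E, i ∈ I}; that is, B_K is the smallest closed ideal of B with which K is associated. -/

import Mathlib

open scoped RightActions

/-- The closed linear span of a subset of a topological `ℂ`-module. -/
noncomputable def clSpan {M : Type*} [AddCommMonoid M] [Module ℂ M] [TopologicalSpace M]
    (S : Set M) : Set M :=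
  closure (Submodule.span ℂ S : Set M)

/-- A subset is a (complex) linear subspace. -/
def IsLinearSubspace {M : Type*} [AddCommMonoid M] [Module ℂ M] (K : Set M) : Prop :=
  (0 : M) ∈ K ∧ (∀ x ∈ K, ∀ y ∈ K, x + y ∈ K) ∧ ∀ (c : ℂ), ∀ x ∈ K, c • x ∈ K

/-- A closed two-sided ideal of a C*-algebra `B`. -/
structure IsClosedTwoSidedIdeal {B : Type*} [NonUnitalCStarAlgebra B] (I : Set B) : Prop where
  isClosed : IsClosed I
  subspace : IsLinearSubspace I
  mul_mem_left : ∀ (b : B), ∀ a ∈ I, b * a ∈ I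
  mul_mem_right : ∀ (b : B), ∀ a ∈ I, a * b ∈ I

/-- The `CStarModule` class as it stood in Mathlib of December 2024: a *right* module
(`SMul Aᵐᵒᵖ E`), with `⟪x, y <• a⟫ = ⟪x, y⟫ * a`. -/
class CStarModuleOld (A E : Type*) [NonUnitalSemiring A] [StarRing A] [Module ℂ A]
    [AddCommGroup E] [Module ℂ E] [PartialOrder A] [SMul Aᵐᵒᵖ E] [Norm A] [Norm E]
    extends Inner A E where
  inner_add_right {x} {y} {z} : inner x (y + z) = inner x y + inner x z
  inner_self_nonneg {x} : 0 ≤ inner x x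
  inner_self {x} : inner x x = 0 ↔ x = 0
  inner_op_smul_right {a : A} {x y : E} : inner x (y <• a) = inner x y * a
  inner_smul_right_complex {z : ℂ} {x} {y} : inner x (z • y) = z • inner x y
  star_inner x y : star (inner x y) = inner y x
  norm_eq_sqrt_norm_inner_self x : ‖x‖ = Real.sqrt ‖inner x x‖

section HilbertModule

variable (B : Type*) [NonUnitalCStarAlgebra B] [PartialOrder B] [StarOrderedRing B]
variable {E : Type*} [NormedAddCommGroup E] [NormedSpace ℂ E] [SMul Bᵐᵒᵖ E] [CStarModuleOld B E]

/-- `K ⊆ E` is an *ideal submodule* if it is the closed linear span of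
`{x <• i : x ∈ E, i ∈ I}` for some closed two-sided ideal `I` of `B`. -/
def IsIdealSubmodule (K : Set E) : Prop :=
  ∃ I : Set B, IsClosedTwoSidedIdeal I ∧
    K = clSpan {z : E | ∃ x : E, ∃ i ∈ I, z = x <• i}

/-- A *ternary ideal* of a Hilbert `B`-module `E`: a linear subspace `K` with
`x <• ⟪k, y⟫ ∈ K` for all `x y ∈ E` and `k ∈ K`. -/
def IsTernaryIdeal (K : Set E) : Prop :=
  IsLinearSubspace K ∧ ∀ (x y : E), ∀ k ∈ K, x <• (inner B k y : B) ∈ K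

/-- `B_S`: the closed linear span in `B` of all inner products of elements of `S`. -/
noncomputable def rangeIdeal (S : Set E) : Set B :=
  clSpan {b : B | ∃ k ∈ S, ∃ k' ∈ S, b = (inner B k k' : B)}

/-- The orthogonal complement of a subset of a Hilbert `B`-module. -/
def perp (S : Set E) : Set E :=
  {x : E | ∀ s ∈ S, (inner B x s : B) = 0}

end HilbertModule

namespace CStarModuleOld
section OldAux

variable {B : Type*} [NonUnitalCStarAlgebra B] [PartialOrder B] [StarOrderedRing B]
variable {E : Type*} [NormedAddCommGroup E] [NormedSpace ℂ E] [SMul Bᵐᵒᵖ E] [CStarModuleOld B E]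

set_option linter.unusedSectionVars false

attribute [simp] CStarModuleOld.inner_add_right CStarModuleOld.star_inner
  CStarModuleOld.inner_op_smul_right CStarModuleOld.inner_smul_right_complex

@[simp] lemma inner_add_left {x y z : E} : inner B (x + y) z = inner B x z + inner B y z := by
  rw [← star_star (r := inner B (x + y) z)]
  simp only [CStarModuleOld.inner_add_right, star_add, CStarModuleOld.star_inner]

@[simp] lemma inner_op_smul_left {a : B} {x y : E} :
    inner B (x <• a) y = star a * inner B x y := by
  rw [← CStarModuleOld.star_inner y, CStarModuleOld.inner_op_smul_right, star_mul,
    CStarModuleOld.star_inner]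

@[simp] lemma inner_smul_left_complex {z : ℂ} {x y : E} :
    inner B (z • x) y = star z • inner B x y := by
  rw [← CStarModuleOld.star_inner y, CStarModuleOld.inner_smul_right_complex, star_smul,
    CStarModuleOld.star_inner]

@[simp] lemma inner_smul_left_real {z : ℝ} {x y : E} : inner B (z • x) y = z • inner B x y := by
  have h₁ : z • x = (z : ℂ) • x := by simp
  rw [h₁, inner_smul_left_complex]
  simp

@[simp] lemma inner_smul_right_real {z : ℝ} {x y : E} : inner B x (z • y) = z • inner B x y := by
  have h₁ : z • y = (z : ℂ) • y := by simp
  rw [h₁, CStarModuleOld.inner_smul_right_complex]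
  simp

@[simp] lemma inner_zero_right {x : E} : inner B x 0 = 0 := by
  have h := CStarModuleOld.inner_add_right (A := B) (x := x) (y := (0 : E)) (z := 0)
  simpa using h

@[simp] lemma inner_neg_right {x y : E} : inner B x (-y) = -inner B x y := by
  have h := CStarModuleOld.inner_add_right (A := B) (x := x) (y := y) (z := -y)
  rw [add_neg_cancel, inner_zero_right] at h
  exact (neg_eq_of_add_eq_zero_right h.symm).symm

@[simp] lemma inner_sub_right {x y z : E} : inner B x (y - z) = inner B x y - inner B x z := by
  rw [sub_eq_add_neg, CStarModuleOld.inner_add_right, inner_neg_right, ← sub_eq_add_neg]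

@[simp] lemma inner_zero_left {x : E} : inner B 0 x = 0 := by
  rw [← CStarModuleOld.star_inner, inner_zero_right, star_zero]

@[simp] lemma inner_sub_left {x y z : E} : inner B (x - y) z = inner B x z - inner B y z := by
  rw [← CStarModuleOld.star_inner, inner_sub_right, star_sub, CStarModuleOld.star_inner,
    CStarModuleOld.star_inner]

lemma norm_sq_eq {x : E} : ‖x‖ ^ 2 = ‖(inner B x x : B)‖ := by
  rw [CStarModuleOld.norm_eq_sqrt_norm_inner_self (A := B) x, Real.sq_sqrt (norm_nonneg _)]

lemma inner_mul_inner_swap_le {x y : E} :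
    (inner B y x : B) * inner B x y ≤ ‖x‖ ^ 2 • (inner B y y : B) := by
  rcases eq_or_ne x 0 with h | h
  · simp [h]
  · have hx : 0 < ‖x‖ := norm_pos_iff.mpr h
    have h₁ : ∀ a : B, (0 : B) ≤ ‖x‖ ^ 2 • (star a * a) - ‖x‖ ^ 2 • (star a * inner B x y)
        - ‖x‖ ^ 2 • (inner B y x * a) + ‖x‖ ^ 2 • (‖x‖ ^ 2 • inner B y y) := fun a => by
      calc (0 : B) ≤ inner B (x <• a - ‖x‖ ^ 2 • y) (x <• a - ‖x‖ ^ 2 • y) :=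
            CStarModuleOld.inner_self_nonneg
        _ = star a * inner B x x * a - ‖x‖ ^ 2 • (star a * inner B x y)
            - ‖x‖ ^ 2 • (inner B y x * a) + ‖x‖ ^ 2 • (‖x‖ ^ 2 • inner B y y) := by
          simp only [inner_sub_right, CStarModuleOld.inner_op_smul_right, inner_sub_left,
            inner_op_smul_left, inner_smul_left_real, inner_smul_right_real, mul_sub, sub_mul,
            smul_mul_assoc, mul_smul_comm, smul_sub, mul_assoc]
          abel
        _ ≤ ‖x‖ ^ 2 • (star a * a) - ‖x‖ ^ 2 • (star a * inner B x y)
            - ‖x‖ ^ 2 • (inner B y x * a) + ‖x‖ ^ 2 • (‖x‖ ^ 2 • inner B y y) := by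
          gcongr
          calc star a * inner B x x * a ≤ ‖(inner B x x : B)‖ • (star a * a) :=
                CStarAlgebra.star_left_conjugate_le_norm_smul (CStarModuleOld.star_inner x x)
            _ = ‖x‖ ^ 2 • (star a * a) := by rw [norm_sq_eq (B := B)]
    specialize h₁ (inner B x y)
    simp only [CStarModuleOld.star_inner, sub_self, zero_sub, le_neg_add_iff_add_le,
      add_zero] at h₁
    rwa [smul_le_smul_iff_of_pos_left (pow_pos hx _)] at h₁

variable (E) in
lemma norm_inner_le {x y : E} : ‖(inner B x y : B)‖ ≤ ‖x‖ * ‖y‖ := by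
  have : ‖(inner B x y : B)‖ ^ 2 ≤ (‖x‖ * ‖y‖) ^ 2 := by
    calc ‖(inner B x y : B)‖ ^ 2 = ‖(inner B y x : B) * inner B x y‖ := by
          rw [← CStarModuleOld.star_inner x y, CStarRing.norm_star_mul_self, pow_two]
    _ ≤ ‖‖x‖ ^ 2 • (inner B y y : B)‖ := by
        refine CStarAlgebra.norm_le_norm_of_nonneg_of_le ?_ inner_mul_inner_swap_le
        rw [← CStarModuleOld.star_inner x y]
        exact star_mul_self_nonneg _
    _ = ‖x‖ ^ 2 * ‖(inner B y y : B)‖ := by simp [norm_smul]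
    _ = ‖x‖ ^ 2 * ‖y‖ ^ 2 := by rw [norm_sq_eq (B := B) (x := y)]
    _ = (‖x‖ * ‖y‖) ^ 2 := by ring
  exact (pow_le_pow_iff_left₀ (norm_nonneg _) (by positivity) two_ne_zero).mp this

end OldAux
end CStarModuleOld

section ClSpanAux

variable {M N : Type*} [NormedAddCommGroup M] [NormedSpace ℂ M]
  [NormedAddCommGroup N] [NormedSpace ℂ N]

/-- A linear subspace as a submodule. -/
def IsLinearSubspace.toSubmodule {T : Set M} (h : IsLinearSubspace T) : Submodule ℂ M where
  carrier := T
  add_mem' {a b} ha hb := h.2.1 a ha b hb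
  zero_mem' := h.1
  smul_mem' c x hx := h.2.2 c x hx

lemma subset_clSpan (S : Set M) : S ⊆ clSpan S :=
  (Submodule.subset_span (R := ℂ)).trans subset_closure

lemma isLinearSubspace_clSpan (S : Set M) : IsLinearSubspace (clSpan S) := by
  have h : clSpan S = ((Submodule.span ℂ S).topologicalClosure : Set M) := rfl
  rw [h]
  exact ⟨Submodule.zero_mem _, fun x hx y hy => Submodule.add_mem _ hx hy,
    fun c x hx => Submodule.smul_mem _ c hx⟩

lemma clSpan_subset {S T : Set M} (hT : IsLinearSubspace T) (hTc : IsClosed T) (h : S ⊆ T) :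
    clSpan S ⊆ T := by
  refine closure_minimal ?_ hTc
  exact fun x hx => Submodule.span_le (p := hT.toSubmodule).mpr h hx

lemma mem_of_mem_clSpan (f : M →L[ℂ] N) {S : Set M} {T : Set N} (hT : IsLinearSubspace T)
    (hTc : IsClosed T) (h : ∀ s ∈ S, f s ∈ T) {x : M} (hx : x ∈ clSpan S) : f x ∈ T := by
  have h1 : Submodule.span ℂ S ≤ hT.toSubmodule.comap f.toLinearMap :=
    Submodule.span_le.mpr h
  have h2 : closure (Submodule.span ℂ S : Set M) ⊆ f ⁻¹' T := by
    refine closure_minimal (fun y hy => h1 hy) ?_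
    exact hTc.preimage f.continuous
  exact h2 hx

end ClSpanAux
section HilbertModuleAux

variable {B : Type*} [NonUnitalCStarAlgebra B] [PartialOrder B] [StarOrderedRing B]
variable {E : Type*} [NormedAddCommGroup E] [NormedSpace ℂ E] [SMul Bᵐᵒᵖ E] [CStarModuleOld B E]

set_option linter.unusedSectionVars false

open CStarModuleOld in
lemma ext_inner {u v : E} (h : ∀ z : E, (inner B z u : B) = inner B z v) : u = v := by
  have : (inner B (u - v) (u - v) : B) = 0 := by
    simp [CStarModuleOld.inner_sub_right, sub_eq_zero, h (u - v)]
  rwa [CStarModuleOld.inner_self, sub_eq_zero] at this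

open CStarModuleOld in
lemma norm_op_smul_le (x : E) (b : B) : ‖x <• b‖ ≤ ‖x‖ * ‖b‖ := by
  have h1 : ‖x <• b‖ ^ 2 ≤ (‖x‖ * ‖b‖) ^ 2 := by
    rw [CStarModuleOld.norm_sq_eq (B := B)]
    simp only [inner_op_smul_right, inner_op_smul_left]
    calc ‖star b * inner B x x * b‖ ≤ ‖star b‖ * ‖(inner B x x : B)‖ * ‖b‖ :=
          (norm_mul_le _ _).trans (by gcongr; exact norm_mul_le _ _)
      _ ≤ ‖b‖ * ‖x‖ ^ 2 * ‖b‖ := by rw [norm_star, CStarModuleOld.norm_sq_eq (B := B)]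
      _ = (‖x‖ * ‖b‖) ^ 2 := by ring
  exact (pow_le_pow_iff_left₀ (norm_nonneg _) (by positivity) two_ne_zero).mp h1

open CStarModuleOld in
noncomputable def opSmulCLM (x : E) : B →L[ℂ] E :=
  LinearMap.mkContinuous
    { toFun := fun b => x <• b
      map_add' := fun b c => ext_inner fun z => by
        show (inner B z (x <• (b + c)) : B) = inner B z (x <• b + x <• c)
        rw [CStarModuleOld.inner_op_smul_right, CStarModuleOld.inner_add_right,
          CStarModuleOld.inner_op_smul_right, CStarModuleOld.inner_op_smul_right, mul_add]
      map_smul' := fun c b => ext_inner fun z => by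
        show (inner B z (x <• (c • b)) : B) = inner B z (c • (x <• b))
        rw [CStarModuleOld.inner_op_smul_right, CStarModuleOld.inner_smul_right_complex,
          CStarModuleOld.inner_op_smul_right, mul_smul_comm] }
    ‖x‖ (fun b => by simpa [mul_comm] using norm_op_smul_le x b)

@[simp] lemma opSmulCLM_apply (x : E) (b : B) : opSmulCLM x b = x <• b := rfl

open CStarModuleOld in
noncomputable def smulOpCLM (b : B) : E →L[ℂ] E :=
  LinearMap.mkContinuous
    { toFun := fun x => x <• b
      map_add' := fun x y => ext_inner fun z => by
        show (inner B z ((x + y) <• b) : B) = inner B z (x <• b + y <• b)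
        simp only [CStarModuleOld.inner_op_smul_right, CStarModuleOld.inner_add_right, add_mul]
      map_smul' := fun c x => ext_inner fun z => by
        show (inner B z ((c • x) <• b) : B) = inner B z (c • (x <• b))
        simp only [CStarModuleOld.inner_op_smul_right, CStarModuleOld.inner_smul_right_complex,
          smul_mul_assoc] }
    ‖b‖ (fun x => by simpa [mul_comm] using norm_op_smul_le x b)

@[simp] lemma smulOpCLM_apply (x : E) (b : B) : smulOpCLM b x = x <• b := rfl

lemma opSmul_opSmul (x : E) (i b : B) : (x <• i) <• b = x <• (i * b) :=
  ext_inner (B := B) fun z => by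
    simp only [CStarModuleOld.inner_op_smul_right, mul_assoc]

end HilbertModuleAux
section CfcIdeal

variable {B : Type*} [NonUnitalCStarAlgebra B] [PartialOrder B] [StarOrderedRing B]

open scoped ContinuousMapZero

/-- Continuous functional calculus stays in a closed star-closed two-sided ideal. -/
lemma cfcₙ_mem_closed_ideal {J : Set B} (hJ : IsClosedTwoSidedIdeal J)
    (hJstar : ∀ b ∈ J, star b ∈ J) {a : B} (haJ : a ∈ J) (f : ℝ → ℝ) :
    cfcₙ f a ∈ J := by
  refine cfcₙ_cases (· ∈ J) a f hJ.subspace.1 fun hf hf0 ha => ?_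
  suffices hmain : ∀ g : C(quasispectrum ℝ a, ℝ)₀, cfcₙHom ha g ∈ J by exact hmain _
  intro g
  have hdense := ContinuousMapZero.adjoin_id_dense (quasispectrum ℝ a)
  have hS : (NonUnitalStarAlgebra.adjoin ℝ {(ContinuousMapZero.id (quasispectrum ℝ a) :
      C(quasispectrum ℝ a, ℝ)₀)} : Set C(quasispectrum ℝ a, ℝ)₀) ⊆
      (cfcₙHom ha) ⁻¹' J := by
    intro g hg
    induction hg using NonUnitalStarAlgebra.adjoin_induction with
    | mem x hx =>
      simp only [Set.mem_singleton_iff] at hx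
      subst hx
      show cfcₙHom ha _ ∈ J
      rw [cfcₙHom_id ha]
      exact haJ
    | add x y hx hy hx' hy' => show cfcₙHom ha _ ∈ J; rw [map_add]; exact hJ.subspace.2.1 _ hx' _ hy'
    | zero => show cfcₙHom ha _ ∈ J; rw [map_zero]; exact hJ.subspace.1
    | mul x y hx hy hx' hy' => show cfcₙHom ha _ ∈ J; rw [map_mul]; exact hJ.mul_mem_right _ _ hx'
    | smul r x hx hx' =>
      show cfcₙHom ha _ ∈ J
      rw [map_smul, ← Complex.coe_smul]
      exact hJ.subspace.2.2 _ _ hx'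
    | star x hx hx' => show cfcₙHom ha _ ∈ J; rw [map_star]; exact hJstar _ hx'
  have hclosed : IsClosed ((cfcₙHom ha) ⁻¹' J : Set C(quasispectrum ℝ a, ℝ)₀) :=
    hJ.isClosed.preimage (cfcₙHom_continuous ha)
  have := closure_minimal hS hclosed
  rw [hdense.closure_eq] at this
  exact this (Set.mem_univ g)

end CfcIdeal

section Approx

variable {B : Type*} [NonUnitalCStarAlgebra B] [PartialOrder B] [StarOrderedRing B]
variable {E : Type*} [NormedAddCommGroup E] [NormedSpace ℂ E] [SMul Bᵐᵒᵖ E] [CStarModuleOld B E]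

set_option linter.unusedSectionVars false
set_option maxHeartbeats 1000000 in
/-- Key approximation: an element `k` whose self inner B product lies in a closed star-closed
two-sided ideal `J` can be approximated by `k <• b` with `b ∈ J`. -/
lemma exists_approx_opSmul (k : E) {J : Set B} (hJ : IsClosedTwoSidedIdeal J)
    (hJstar : ∀ b ∈ J, star b ∈ J) (haJ : (inner B k k : B) ∈ J) {ε : ℝ} (hε : 0 < ε) :
    ∃ b ∈ J, ‖k - k <• b‖ < ε := by
  set a : B := inner B k k with ha_def
  have ha : 0 ≤ a := CStarModuleOld.inner_self_nonneg
  have hsa : IsSelfAdjoint a := .of_nonneg ha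
  set δ : ℝ := ε ^ 2 / 2 with hδ_def
  have hδ : 0 < δ := by positivity
  set f : ℝ → ℝ := fun t => t / (t + δ) with hf_def
  set b : B := cfcₙ f a with hb_def
  refine ⟨b, cfcₙ_mem_closed_ideal hJ hJstar haJ f, ?_⟩
  have hbsa : star b = b := (cfcₙ_predicate f a : IsSelfAdjoint _)
  -- the inner B product of the difference
  have hinner : (inner B (k - k <• b) (k - k <• b) : B)
      = (a - a * b) - (b * a - b * (a * b)) := by
    simp only [CStarModuleOld.inner_sub_right, CStarModuleOld.inner_sub_left,
      CStarModuleOld.inner_op_smul_right, CStarModuleOld.inner_op_smul_left, hbsa, mul_assoc,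
      ← ha_def]
    noncomm_ring
  -- functional calculus computation
  have hne : ∀ t ∈ quasispectrum ℝ a, t + δ ≠ 0 := by
    intro t ht
    have := quasispectrum_nonneg_of_nonneg a ha t ht
    positivity
  have hf : ContinuousOn f (quasispectrum ℝ a) := continuousOn_id.div (by fun_prop) hne
  have hf0 : f 0 = 0 := by simp [hf_def]
  have hid : ContinuousOn (fun t : ℝ => t) (quasispectrum ℝ a) := continuousOn_id
  set g : ℝ → ℝ := fun t => (t - t * f t) - (f t * t - f t * (t * f t)) with hg_def
  have key : cfcₙ g a = (a - a * b) - (b * a - b * (a * b)) := by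
    have h1 : cfcₙ (fun t : ℝ => t * f t) a = a * b := by
      rw [cfcₙ_mul (f := fun t : ℝ => t) (g := f) a hid (by simp) hf hf0, cfcₙ_id' ℝ a, hb_def]
    have h2 : cfcₙ (fun t : ℝ => f t * t) a = b * a := by
      rw [cfcₙ_mul (f := f) (g := fun t : ℝ => t) a hf hf0 hid (by simp), cfcₙ_id' ℝ a, hb_def]
    have h3 : cfcₙ (fun t : ℝ => f t * (t * f t)) a = b * (a * b) := by
      rw [cfcₙ_mul (f := f) (g := fun t => t * f t) a hf hf0 (hid.mul hf) (by simp [hf0]), h1,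
        hb_def]
    have h4 : cfcₙ (fun t : ℝ => f t * t - f t * (t * f t)) a = b * a - b * (a * b) := by
      rw [cfcₙ_sub (f := fun t => f t * t) (g := fun t => f t * (t * f t)) a (hf.mul hid)
        (by simp [hf0]) (hf.mul (hid.mul hf)) (by simp [hf0]), h2, h3]
    have h5 : cfcₙ (fun t : ℝ => t - t * f t) a = a - a * b := by
      rw [cfcₙ_sub (f := fun t : ℝ => t) (g := fun t => t * f t) a hid (by simp) (hid.mul hf)
        (by simp [hf0]), cfcₙ_id' ℝ a, h1]
    rw [hg_def, cfcₙ_sub (f := fun t => t - t * f t) (g := fun t => f t * t - f t * (t * f t)) a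
      (hid.sub (hid.mul hf)) (by simp [hf0]) ((hf.mul hid).sub (hf.mul (hid.mul hf)))
      (by simp [hf0]), h4, h5]
  have hnorm : ‖(a - a * b) - (b * a - b * (a * b))‖ ≤ δ := by
    rw [← key]
    refine norm_cfcₙ_le fun t ht => ?_
    have ht0 : 0 ≤ t := quasispectrum_nonneg_of_nonneg a ha t ht
    have htδ : 0 < t + δ := by positivity
    have hgt : g t = t * δ ^ 2 / (t + δ) ^ 2 := by
      rw [hg_def, hf_def]
      field_simp
      ring
    rw [hgt, Real.norm_eq_abs, abs_of_nonneg (by positivity), div_le_iff₀ (by positivity)]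
    nlinarith [mul_nonneg ht0 (mul_nonneg hδ.le hδ.le), mul_nonneg hδ.le (mul_nonneg ht0 ht0),
      mul_pos (mul_pos hδ hδ) hδ]
  have hsq : ‖k - k <• b‖ ^ 2 < ε ^ 2 := by
    rw [CStarModuleOld.norm_sq_eq (B := B), hinner]
    calc ‖(a - a * b) - (b * a - b * (a * b))‖ ≤ δ := hnorm
      _ < ε ^ 2 := by rw [hδ_def]; linarith [sq_nonneg ε, hδ]
  exact lt_of_pow_lt_pow_left₀ 2 hε.le hsq

end Approx

section InnerCLM

variable {B : Type*} [NonUnitalCStarAlgebra B] [PartialOrder B] [StarOrderedRing B]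
variable {E : Type*} [NormedAddCommGroup E] [NormedSpace ℂ E] [SMul Bᵐᵒᵖ E] [CStarModuleOld B E]

set_option linter.unusedSectionVars false

/-- `inner B x ·` as a continuous linear map. -/
noncomputable def innerCLM (x : E) : E →L[ℂ] B :=
  LinearMap.mkContinuous
    { toFun := fun y => (inner B x y : B)
      map_add' := fun y z => by simp
      map_smul' := fun c y => by simp }
    ‖x‖ (fun y => CStarModuleOld.norm_inner_le E)

@[simp] lemma innerCLM_apply (x y : E) : innerCLM x y = (inner B x y : B) := rfl

end InnerCLM

set_option maxHeartbeats 1000000 in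
/-- for an ideal submodule `K` of `E`, `B_K` is a closed two-sided ideal of
`B`, `K` is the ideal submodule associated with `B_K`, and `B_K` is contained in every
closed two-sided ideal `I` of `B` with which `K` is associated. -/
theorem rangeIdeal_smallest_associated_ideal
    {B : Type*} [NonUnitalCStarAlgebra B] [PartialOrder B] [StarOrderedRing B]
    {E : Type*} [NormedAddCommGroup E] [NormedSpace ℂ E] [SMul Bᵐᵒᵖ E]
    [CStarModuleOld B E] [CompleteSpace E] (K : Set E) (hK : IsIdealSubmodule B K) :
    IsClosedTwoSidedIdeal (rangeIdeal B K) ∧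
    K = clSpan {z : E | ∃ x : E, ∃ b ∈ rangeIdeal B K, z = x <• b} ∧
    ∀ I : Set B, IsClosedTwoSidedIdeal I →
      K = clSpan {z : E | ∃ x : E, ∃ i ∈ I, z = x <• i} → rangeIdeal B K ⊆ I := by
  obtain ⟨I, hI, hKdef⟩ := hK
  have hKc : IsClosed K := hKdef ▸ isClosed_closure
  have hKsub : IsLinearSubspace K := hKdef ▸ isLinearSubspace_clSpan _
  have hrIc : IsClosed (rangeIdeal B K) := isClosed_closure
  have hrIsub : IsLinearSubspace (rangeIdeal B K) := isLinearSubspace_clSpan _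
  -- `K` is stable under the right `B`-action
  have hKsmul : ∀ b : B, ∀ k ∈ K, k <• b ∈ K := by
    intro b k hk
    rw [hKdef] at hk
    have := mem_of_mem_clSpan (smulOpCLM b) hKsub hKc (fun s hs => ?_) hk
    · simpa using this
    · obtain ⟨x, i, hi, rfl⟩ := hs
      rw [smulOpCLM_apply, opSmul_opSmul, hKdef]
      exact subset_clSpan _ ⟨x, i * b, hI.mul_mem_right b i hi, rfl⟩
  -- inner B products with elements of an ideal submodule lie in the ideal
  have hinner_mem : ∀ (I' : Set B), IsClosedTwoSidedIdeal I' → ∀ (x : E),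
      ∀ k ∈ clSpan {z : E | ∃ x : E, ∃ i ∈ I', z = x <• i}, (inner B x k : B) ∈ I' := by
    intro I' hI' x k hk
    have := mem_of_mem_clSpan (innerCLM x) hI'.subspace hI'.isClosed (fun s hs => ?_) hk
    · simpa using this
    · obtain ⟨y, i, hi, rfl⟩ := hs
      rw [innerCLM_apply, CStarModuleOld.inner_op_smul_right]
      exact hI'.mul_mem_left (inner B x y) i hi
  -- the generating set of `rangeIdeal B K` is contained in any associated ideal
  have hGI' : ∀ (I' : Set B), IsClosedTwoSidedIdeal I' →
      K = clSpan {z : E | ∃ x : E, ∃ i ∈ I', z = x <• i} →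
      {b : B | ∃ k ∈ K, ∃ k' ∈ K, b = (inner B k k' : B)} ⊆ I' := by
    rintro I' hI' hdef' b ⟨k, hk, k', hk', rfl⟩
    exact hinner_mem I' hI' k k' (hdef' ▸ hk')
  have hGI : {b : B | ∃ k ∈ K, ∃ k' ∈ K, b = (inner B k k' : B)} ⊆ I := hGI' I hI hKdef
  -- part 3
  have hpart3 : ∀ I' : Set B, IsClosedTwoSidedIdeal I' →
      K = clSpan {z : E | ∃ x : E, ∃ i ∈ I', z = x <• i} → rangeIdeal B K ⊆ I' :=
    fun I' hI' hdef' => clSpan_subset hI'.subspace hI'.isClosed (hGI' I' hI' hdef')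
  -- part 1 : ideal properties
  have hmulr : ∀ (b : B), ∀ a ∈ rangeIdeal B K, a * b ∈ rangeIdeal B K := by
    intro b a ha
    have := mem_of_mem_clSpan ((ContinuousLinearMap.mul ℂ B).flip b) hrIsub hrIc
      (fun s hs => ?_) ha
    · simpa using this
    · obtain ⟨k, hk, k', hk', rfl⟩ := hs
      have h1 : ((ContinuousLinearMap.mul ℂ B).flip b) (inner B k k' : B)
          = (inner B k (k' <• b) : B) := by
        simp [ContinuousLinearMap.flip_apply, CStarModuleOld.inner_op_smul_right]
      rw [h1]
      exact subset_clSpan _ ⟨k, hk, k' <• b, hKsmul b k' hk', rfl⟩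
  have hstar : ∀ a ∈ rangeIdeal B K, star a ∈ rangeIdeal B K := by
    intro a ha
    have hmap : Set.MapsTo (star : B → B)
        (Submodule.span ℂ {b : B | ∃ k ∈ K, ∃ k' ∈ K, b = (inner B k k' : B)} : Set B)
        (rangeIdeal B K) := by
      intro y hy
      induction hy using Submodule.span_induction with
      | mem y hy =>
        obtain ⟨k, hk, k', hk', rfl⟩ := hy
        rw [CStarModuleOld.star_inner]
        exact subset_clSpan _ ⟨k', hk', k, hk, rfl⟩
      | zero => rw [star_zero]; exact hrIsub.1
      | add x y hx hy ihx ihy => rw [star_add]; exact hrIsub.2.1 _ ihx _ ihy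
      | smul c x hx ihx => rw [star_smul]; exact hrIsub.2.2 _ _ ihx
    have := map_mem_closure continuous_star ha hmap
    rwa [hrIc.closure_eq] at this
  have hmull : ∀ (b : B), ∀ a ∈ rangeIdeal B K, b * a ∈ rangeIdeal B K := by
    intro b a ha
    have h3 := hstar _ (hmulr (star b) _ (hstar _ ha))
    rwa [star_mul, star_star, star_star] at h3
  have hIdeal : IsClosedTwoSidedIdeal (rangeIdeal B K) := ⟨hrIc, hrIsub, hmull, hmulr⟩
  refine ⟨hIdeal, ?_, hpart3⟩
  -- part 2
  apply Set.Subset.antisymm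
  · intro k hk
    have hmem : k ∈ closure {z : E | ∃ x : E, ∃ b ∈ rangeIdeal B K, z = x <• b} := by
      rw [Metric.mem_closure_iff]
      intro ε hε
      obtain ⟨b, hb, hlt⟩ := exists_approx_opSmul k hIdeal hstar
        (subset_clSpan _ ⟨k, hk, k, hk, rfl⟩) hε
      exact ⟨k <• b, ⟨k, b, hb, rfl⟩, by rwa [dist_eq_norm]⟩
    exact closure_mono (Submodule.subset_span (R := ℂ)) hmem
  · refine clSpan_subset hKsub hKc ?_
    rintro z ⟨x, b, hb, rfl⟩
    have := mem_of_mem_clSpan (opSmulCLM x) hKsub hKc (fun s hs => ?_) hb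
    · simpa using this
    · obtain ⟨k, hk, k', hk', rfl⟩ := hs
      rw [opSmulCLM_apply, hKdef]
      exact subset_clSpan _ ⟨x, inner B k k', hGI ⟨k, hk, k', hk', rfl⟩, rfl⟩
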